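/- Define H : [0, G(r)] → [r, R] as the inverse of the restriction of G to [r,R], where G(x) = R·g(x/R) and g(t) = (√(1-t²) - t·arccos(t))/π, for 0 < r < R. Then H(y) = R + O(y^{2/3}) as y → 0+; that is, there exist constants C > 0 and δ > 0 such that R - C·y^{2/3} ≤ H(y) ≤ R for all y ∈ (0, δ). -/

import Mathlib

noncomputable def g (t : ℝ) : ℝ := (Real.sqrt (1 - t^2) - t * Real.arccos t) / Real.pi

lemma g_one : g 1 = 0 := by
  simp [g, Real.arccos_one]

lemma arccos_lower {s : ℝ} (h1 : -1 ≤ s) (h2 : s ≤ 1) :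
    Real.sqrt (2 * (1 - s)) ≤ Real.arccos s := by
  have hθ := Real.arccos_nonneg s
  have hcos : Real.cos (Real.arccos s) = s := Real.cos_arccos h1 h2
  have hb := Real.one_sub_sq_div_two_le_cos (x := Real.arccos s)
  rw [hcos] at hb
  have h2s : 2 * (1 - s) ≤ (Real.arccos s) ^ 2 := by nlinarith
  calc Real.sqrt (2 * (1 - s)) ≤ Real.sqrt ((Real.arccos s) ^ 2) :=
        Real.sqrt_le_sqrt h2s
    _ = Real.arccos s := by rw [Real.sqrt_sq hθ]

lemma g_hasDerivAt {s : ℝ} (h1 : -1 < s) (h2 : s < 1) :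
    HasDerivAt g (-(Real.arccos s) / Real.pi) s := by
  have hu : (0:ℝ) < 1 - s^2 := by nlinarith
  have hune : (1:ℝ) - s^2 ≠ 0 := ne_of_gt hu
  have hsq : Real.sqrt (1 - s^2) ≠ 0 := by
    positivity
  have hinner : HasDerivAt (fun x : ℝ => 1 - x^2) (-(2*s)) s := by
    simpa using (hasDerivAt_pow 2 s).const_sub 1
  have hsqrt : HasDerivAt (fun x : ℝ => Real.sqrt (1 - x^2))
      (1 / (2 * Real.sqrt (1 - s^2)) * (-(2*s))) s :=
    (Real.hasDerivAt_sqrt hune).comp s hinner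
  have harccos := Real.hasDerivAt_arccos (ne_of_gt h1) (ne_of_lt h2)
  have hmul : HasDerivAt (fun x : ℝ => x * Real.arccos x)
      (1 * Real.arccos s + s * -(1 / Real.sqrt (1 - s^2))) s :=
    (hasDerivAt_id s).mul harccos
  have h := (hsqrt.sub hmul).div_const Real.pi
  exact h.congr_deriv (by ring)

lemma g_lower {t : ℝ} (h0 : 0 ≤ t) (h1 : t ≤ 1) :
    2 * Real.sqrt 2 / (3 * Real.pi) * (1 - t) ^ ((3:ℝ)/2) ≤ g t := by
  set c : ℝ := 2 * Real.sqrt 2 / (3 * Real.pi) with hc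
  rcases eq_or_lt_of_le h1 with rfl | hlt
  · simp [g_one, Real.zero_rpow (by norm_num : ((3:ℝ)/2) ≠ 0)]
  set φ : ℝ → ℝ := fun s => g s - c * (1 - s) ^ ((3:ℝ)/2) with hφ
  have hrpow_cont : Continuous fun x : ℝ => x ^ ((3:ℝ)/2) :=
    continuous_iff_continuousAt.2 fun x =>
      Real.continuousAt_rpow_const x _ (Or.inr (by norm_num))
  have hgcont : Continuous g := by
    unfold g
    exact ((Real.continuous_sqrt.comp (by continuity)).sub
      (continuous_id.mul Real.continuous_arccos)).div_const _
  have hφcont : Continuous φ :=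
    hgcont.sub (continuous_const.mul (hrpow_cont.comp (continuous_const.sub continuous_id)))
  have hφderiv : ∀ s ∈ Set.Ioo t 1, HasDerivAt φ
      (-(Real.arccos s) / Real.pi - c * ((3:ℝ)/2 * (1 - s) ^ ((1:ℝ)/2) * (-1))) s := by
    intro s hs
    have hs0 : -1 < s := lt_of_lt_of_le (by norm_num) (le_trans h0 hs.1.le)
    have hg := g_hasDerivAt hs0 hs.2
    have hinner : HasDerivAt (fun x : ℝ => 1 - x) (-1) s := (hasDerivAt_id s).const_sub 1
    have hp : HasDerivAt (fun x : ℝ => (1 - x) ^ ((3:ℝ)/2))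
        ((3:ℝ)/2 * (1 - s) ^ ((3:ℝ)/2 - 1) * (-1)) s :=
      (Real.hasDerivAt_rpow_const (Or.inr (by norm_num))).comp s hinner
    have h32 : ((3:ℝ)/2 - 1) = (1:ℝ)/2 := by norm_num
    rw [h32] at hp
    exact hg.sub ((hp.const_mul c))
  have hanti : AntitoneOn φ (Set.Icc t 1) := by
    apply antitoneOn_of_deriv_nonpos (convex_Icc t 1) hφcont.continuousOn
    · intro s hs
      rw [interior_Icc] at hs
      exact ((hφderiv s hs).differentiableAt).differentiableWithinAt
    · intro s hs
      rw [interior_Icc] at hs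
      rw [(hφderiv s hs).deriv]
      have hs1 : s ≤ 1 := hs.2.le
      have hsm1 : (-1:ℝ) ≤ s := le_trans (by norm_num) (le_trans h0 hs.1.le)
      have hlow := arccos_lower hsm1 hs1
      have hsqrtmul : Real.sqrt (2 * (1 - s)) = Real.sqrt 2 * (1 - s) ^ ((1:ℝ)/2) := by
        rw [Real.sqrt_mul (by norm_num), Real.sqrt_eq_rpow (1 - s)]
      have hπ : (0:ℝ) < Real.pi := Real.pi_pos
      have hkey : Real.sqrt 2 * (1 - s) ^ ((1:ℝ)/2) ≤ Real.arccos s := by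
        rw [← hsqrtmul]; exact hlow
      have hc32 : c * ((3:ℝ)/2) = Real.sqrt 2 / Real.pi := by
        rw [hc]; field_simp
      have : c * ((3:ℝ)/2 * (1 - s) ^ ((1:ℝ)/2)) ≤ Real.arccos s / Real.pi := by
        rw [show c * ((3:ℝ)/2 * (1 - s) ^ ((1:ℝ)/2)) = c * ((3:ℝ)/2) * (1 - s) ^ ((1:ℝ)/2) by ring,
          hc32, div_mul_eq_mul_div, div_le_div_iff_of_pos_right hπ]
        exact hkey
      rw [neg_div]
      linarith
  have h1mem : (1:ℝ) ∈ Set.Icc t 1 := ⟨h1, le_refl 1⟩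
  have htmem : t ∈ Set.Icc t 1 := ⟨le_refl t, h1⟩
  have := hanti htmem h1mem h1
  have hφ1 : φ 1 = 0 := by
    simp [hφ, g_one, Real.zero_rpow (by norm_num : ((3:ℝ)/2) ≠ 0)]
  rw [hφ1] at this
  simpa [hφ, sub_nonneg, hc] using this

theorem H_near_R (r R : ℝ) (hr : 0 < r) (hrR : r < R) (H : ℝ → ℝ)
    (hH : ∀ x ∈ Set.Icc r R, H (R * g (x / R)) = x) :
    ∃ C > (0:ℝ), ∃ δ > (0:ℝ), ∀ y ∈ Set.Ioo (0:ℝ) δ,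
      R - C * y ^ ((2:ℝ)/3) ≤ H y ∧ H y ≤ R := by
  have hR : (0:ℝ) < R := lt_trans hr hrR
  have hπ : (0:ℝ) < Real.pi := Real.pi_pos
  set c : ℝ := 2 * Real.sqrt 2 / (3 * Real.pi) with hc
  have hcpos : 0 < c := by
    rw [hc]; positivity
  set G : ℝ → ℝ := fun x => R * g (x / R) with hG
  have hGR : G R = 0 := by
    simp [hG, div_self (ne_of_gt hR), g_one]
  have hrR1 : r / R < 1 := (div_lt_one hR).2 hrR
  have hrR0 : 0 < r / R := div_pos hr hR
  have hGr : 0 < G r := by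
    have hlow := g_lower hrR0.le hrR1.le
    have : (0:ℝ) < c * (1 - r/R) ^ ((3:ℝ)/2) := by
      apply mul_pos hcpos
      apply Real.rpow_pos_of_pos; linarith
    have := lt_of_lt_of_le this hlow
    exact mul_pos hR this
  set C : ℝ := (Real.sqrt R / c) ^ ((2:ℝ)/3) with hC
  have hCpos : 0 < C := by
    apply Real.rpow_pos_of_pos
    positivity
  refine ⟨C, hCpos, G r, hGr, ?_⟩
  intro y hy
  -- IVT: find x ∈ [r, R] with G x = y
  have hGcont : ContinuousOn G (Set.Icc r R) := by
    apply Continuous.continuousOn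
    have hgcont : Continuous g := by
      unfold g
      exact ((Real.continuous_sqrt.comp (by continuity)).sub
        (continuous_id.mul Real.continuous_arccos)).div_const _
    exact continuous_const.mul (hgcont.comp (continuous_id.div_const R))
  have hmem : y ∈ Set.Icc (G R) (G r) := by
    rw [hGR]; exact ⟨hy.1.le, hy.2.le⟩
  obtain ⟨x, hx, hxy⟩ := intermediate_value_Icc' hrR.le hGcont hmem
  have hHy : H y = x := by rw [← hxy]; exact hH x hx
  have hxR1 : x / R ≤ 1 := (div_le_one hR).2 hx.2
  have hxR0 : 0 ≤ x / R := div_nonneg (le_trans hr.le hx.1) hR.le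
  have hRx0 : 0 ≤ R - x := by linarith [hx.2]
  -- lower bound on y
  have hlow : c * (R - x) ^ ((3:ℝ)/2) / Real.sqrt R ≤ y := by
    have h1 := g_lower hxR0 hxR1
    have h2 : R * (c * (1 - x/R) ^ ((3:ℝ)/2)) ≤ y := by
      rw [← hxy, hG]
      exact mul_le_mul_of_nonneg_left h1 hR.le
    have heq : 1 - x / R = (R - x) / R := by field_simp
    rw [heq, Real.div_rpow hRx0 hR.le] at h2
    have hR32 : (R:ℝ) ^ ((3:ℝ)/2) = R * Real.sqrt R := by
      rw [show ((3:ℝ)/2) = 1 + 1/2 by norm_num, Real.rpow_add hR, Real.rpow_one,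
        Real.sqrt_eq_rpow]
    rw [hR32] at h2
    have hsR : 0 < Real.sqrt R := Real.sqrt_pos.2 hR
    calc c * (R - x) ^ ((3:ℝ)/2) / Real.sqrt R
        = R * (c * ((R - x) ^ ((3:ℝ)/2) / (R * Real.sqrt R))) := by
          field_simp
      _ ≤ y := h2
  have hsR : 0 < Real.sqrt R := Real.sqrt_pos.2 hR
  have h3 : (R - x) ^ ((3:ℝ)/2) ≤ Real.sqrt R / c * y := by
    rw [div_le_iff₀ hsR] at hlow
    calc (R - x) ^ ((3:ℝ)/2) = c * (R - x) ^ ((3:ℝ)/2) / c := by field_simp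
      _ ≤ y * Real.sqrt R / c := by
          apply div_le_div_of_nonneg_right hlow hcpos.le
      _ = Real.sqrt R / c * y := by ring
  have h4 : R - x ≤ C * y ^ ((2:ℝ)/3) := by
    have hy0 : (0:ℝ) ≤ y := hy.1.le
    have hrc0 : (0:ℝ) ≤ Real.sqrt R / c := by positivity
    have h5 : ((R - x) ^ ((3:ℝ)/2)) ^ ((2:ℝ)/3) ≤ (Real.sqrt R / c * y) ^ ((2:ℝ)/3) :=
      Real.rpow_le_rpow (Real.rpow_nonneg hRx0 _) h3 (by norm_num)
    have e : ((R - x) ^ ((3:ℝ)/2)) ^ ((2:ℝ)/3) = R - x := by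
      rw [← Real.rpow_mul hRx0, show (3:ℝ)/2 * ((2:ℝ)/3) = 1 by norm_num, Real.rpow_one]
    rwa [e, Real.mul_rpow hrc0 hy0, ← hC] at h5
  rw [hHy]
  exact ⟨by linarith, hx.2⟩
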